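/- Consider an altruistic hedonic game under avg-EQ utilities on n players whose network of friends contains a pinched (d,k')-dome gadget on a player set P, where d ≥ 1, k' > 2d+3, and n ≥ k'·(d+1), and such that no player of P other than the top player p* has a friend outside P. Let Γ be a coalition structure containing P as a coalition. If a coalition C blocks Γ, then C contains no player of the base clique of the gadget (in particular, no fringe player). -/

import Mathlib

open Finset
open scoped Classical

section AHGDefs

variable {N : Type*} [Fintype N] [DecidableEq N]

/-- The set of friends of player `i` inside coalition `C`. -/
noncomputable def friendsIn (G : SimpleGraph N) (C : Finset N) (i : N) : Finset N :=
  C.filter fun j => G.Adj i j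

/-- The friend-oriented valuation of coalition `C` by player `i`:
`val_i(C) = n·|F_i ∩ C| − |E_i ∩ C|`. -/
noncomputable def fval (G : SimpleGraph N) (C : Finset N) (i : N) : ℤ :=
  (Fintype.card N : ℤ) * ((friendsIn G C i).card : ℤ)
    - ((C.filter fun j => ¬ G.Adj i j ∧ j ≠ i).card : ℤ)

/-- Average-based equal-treatment utility. -/
noncomputable def utilAvgEQ (G : SimpleGraph N) (C : Finset N) (i : N) : ℚ :=
  (∑ c ∈ insert i (friendsIn G C i), (fval G C c : ℚ)) /
    ((insert i (friendsIn G C i)).card : ℚ)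

/-- Average-based altruistic-treatment utility with weight `w`. -/
noncomputable def utilAvgAL (G : SimpleGraph N) (w : ℚ) (C : Finset N) (i : N) : ℚ :=
  (fval G C i : ℚ) +
    w * (if (friendsIn G C i).Nonempty then
          (∑ c ∈ friendsIn G C i, (fval G C c : ℚ)) / ((friendsIn G C i).card : ℚ)
         else 0)

/-- Min-based equal-treatment utility. -/
noncomputable def utilMinEQ (G : SimpleGraph N) (C : Finset N) (i : N) : ℤ :=
  (insert i (friendsIn G C i)).inf' (insert_nonempty _ _) (fval G C)

/-- Min-based altruistic-treatment utility with weight `w`. -/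
noncomputable def utilMinAL (G : SimpleGraph N) (w : ℤ) (C : Finset N) (i : N) : ℤ :=
  fval G C i +
    w * (if h : (friendsIn G C i).Nonempty then (friendsIn G C i).inf' h (fval G C) else 0)

/-- A coalition structure (partition of the players), given as the map sending
each player to its coalition. -/
structure CoalitionStructure (N : Type*) [Fintype N] [DecidableEq N] where
  part : N → Finset N
  mem_part : ∀ i, i ∈ part i
  part_eq : ∀ i j, j ∈ part i → part j = part i

/-- A (nonempty) coalition `C` blocks the coalition structure `Γ`. -/
def Blocks {α : Type*} [LT α] (util : Finset N → N → α) (Γ : CoalitionStructure N)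
    (C : Finset N) : Prop :=
  C.Nonempty ∧ ∀ i ∈ C, util (Γ.part i) i < util C i

/-- Core stability: no nonempty coalition blocks `Γ`. -/
def CoreStable {α : Type*} [LT α] (util : Finset N → N → α)
    (Γ : CoalitionStructure N) : Prop :=
  ¬ ∃ C : Finset N, Blocks util Γ C

/-- The base clique of a pinched `(d,k')`-dome gadget on `P` with top player `top`
and (unique) mid player `mid`. -/
noncomputable def pdomeBase (P : Finset N) (top mid : N) : Finset N :=
  P \ {top, mid}

/-- `P` carries a pinched `(d,k')`-dome gadget of the graph `G`, with top player `top`,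
the unique mid player `mid` (obtained by identifying the `d` mid players) and fringe
players `fringe i`. -/
structure IsPinchedDomeGadget (G : SimpleGraph N) (d k' : ℕ) (P : Finset N) (top mid : N)
    (fringe : Fin d → N) : Prop where
  card_eq : P.card = k' - d + 1
  top_mem : top ∈ P
  mid_mem : mid ∈ P
  mid_ne_top : mid ≠ top
  fringe_mem : ∀ i, fringe i ∈ pdomeBase P top mid
  fringe_inj : Function.Injective fringe
  adj_iff : ∀ x ∈ P, ∀ y ∈ P, (G.Adj x y ↔
    ((x = top ∧ y = mid) ∨ (y = top ∧ x = mid) ∨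
     (x ∈ pdomeBase P top mid ∧ y ∈ pdomeBase P top mid ∧ x ≠ y) ∨
     (x = mid ∧ ∃ i, y = fringe i) ∨ (y = mid ∧ ∃ i, x = fringe i)))

/-- `P` carries a pinched `(d,k')`-dome gadget with top player `top`. -/
def HasPinchedDomeGadget (G : SimpleGraph N) (d k' : ℕ) (P : Finset N) (top : N) : Prop :=
  ∃ (mid : N) (fringe : Fin d → N), IsPinchedDomeGadget G d k' P top mid fringe
end AHGDefs


section Helpers
variable {N : Type*} [Fintype N] [DecidableEq N]

lemma friendsIn_eq_inter (G : SimpleGraph N) (C : Finset N) (c : N) :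
    friendsIn G C c = C ∩ Finset.univ.filter (fun j => G.Adj c j) := by
  ext y; simp [friendsIn]

lemma friendsIn_subset (G : SimpleGraph N) (C : Finset N) (c : N) :
    friendsIn G C c ⊆ C := Finset.filter_subset _ _

lemma self_not_mem_friendsIn (G : SimpleGraph N) (C : Finset N) (c : N) :
    c ∉ friendsIn G C c := by
  simp [friendsIn]

lemma fval_eq (G : SimpleGraph N) (C : Finset N) (c : N) (hc : c ∈ C) :
    fval G C c = ((Fintype.card N : ℤ) + 1) * ((friendsIn G C c).card : ℤ)
      - (C.card : ℤ) + 1 := by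
  have hset : (C.filter fun j => ¬ G.Adj c j ∧ j ≠ c)
      = C \ insert c (friendsIn G C c) := by
    ext y
    simp only [friendsIn, Finset.mem_filter, Finset.mem_sdiff, Finset.mem_insert]
    tauto
  have hsub : insert c (friendsIn G C c) ⊆ C :=
    Finset.insert_subset hc (friendsIn_subset G C c)
  have hcard : (insert c (friendsIn G C c)).card = (friendsIn G C c).card + 1 :=
    Finset.card_insert_of_notMem (self_not_mem_friendsIn G C c)
  have h2 : (C.filter fun j => ¬ G.Adj c j ∧ j ≠ c).card
      = C.card - ((friendsIn G C c).card + 1) := by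
    rw [hset, Finset.card_sdiff_of_subset hsub, hcard]
  have hle : (friendsIn G C c).card + 1 ≤ C.card := by
    rw [← hcard]; exact Finset.card_le_card hsub
  unfold fval
  rw [h2]
  push_cast [Nat.cast_sub hle]
  ring

end Helpers


private lemma pd_arith1 (n b d s cc M : ℤ) (f1 : 1 ≤ s) (hbs1 : s + 1 ≤ b)
    (hM0 : 0 ≤ M) (hMd : M ≤ d) (f9 : 1 ≤ d) (f7 : d + 3 ≤ b)
    (f8 : 2 * b + 2 * d + 2 ≤ n) (f5 : s ≤ cc)
    (hkey : ((n + 1) * (b * (b - 1) + d) - b * (b + 1)) * s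
      < ((n + 1) * (s * (s - 1) + M) - s * (cc - 1)) * b) : False := by
  have hs0 : (0:ℤ) ≤ s := by linarith
  have hb0 : (0:ℤ) ≤ b := by linarith
  have k0 : 3 ≤ s * b - d := by nlinarith [mul_nonneg (sub_nonneg.mpr f1) hb0]
  have k1 : 3 * (s * b) ≤ (n + 1) * (s * b - d) := by
    nlinarith [k0, mul_nonneg (by linarith : (0:ℤ) ≤ n - 2*b - 2*d - 2) (by linarith : (0:ℤ) ≤ s*b - d),
      mul_nonneg (sub_nonneg.mpr f1) (mul_nonneg hb0 hb0),
      mul_nonneg (sub_nonneg.mpr f1) (mul_nonneg hb0 (by linarith : (0:ℤ) ≤ d))]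
  have hbs0 : (0:ℤ) ≤ b - s := by linarith
  have k2 : 3 * (s * b) * (b - s) ≤ (n + 1) * ((b - s) * (s * b - d)) := by
    nlinarith [mul_le_mul_of_nonneg_right k1 hbs0]
  have hsb0 : (0:ℤ) ≤ s * b := mul_nonneg hs0 hb0
  have k3 : s * b * (b + 2 - cc) ≤ 3 * (s * b) * (b - s) := by
    nlinarith [mul_nonneg hsb0 (by linarith : (0:ℤ) ≤ b - s - 1),
      mul_nonneg hsb0 (sub_nonneg.mpr f5)]
  have hdM : 0 ≤ (n + 1) * (b * (d - M)) :=
    mul_nonneg (by linarith) (mul_nonneg hb0 (by linarith))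
  nlinarith [hkey, k2, k3, hdM]

private lemma pd_arith2 (n b d cc : ℤ) (f7 : d + 3 ≤ b) (f9 : 1 ≤ d)
    (hkey : ((n + 1) * (b * (b - 1) + d) - b * (b + 1)) * b
      < ((n + 1) * (b * (b - 1) + d) - b * (cc - 1)) * b) : cc ≤ b + 1 := by
  by_contra h
  push_neg at h
  have hb0 : (0:ℤ) ≤ b := by linarith
  nlinarith [hkey, mul_nonneg (mul_nonneg hb0 hb0) (by linarith : (0:ℤ) ≤ cc - b - 2)]

private lemma pd_arith3 (n b d : ℤ) (f7 : d + 3 ≤ b) (f9 : 1 ≤ d)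
    (f8 : 2 * b + 2 * d + 2 ≤ n)
    (hkey : ((n + 1) * (b * (b - 1) + 2 * d + 1) - (b + 1) * (b + 1)) * (b + 1)
      < ((n + 1) * (b * (b - 1) + 2 * d) - (b + 1) * (b + 1 - 1)) * (b + 1)) : False := by
  nlinarith [hkey, mul_nonneg (by linarith : (0:ℤ) ≤ b + 1) (by linarith : (0:ℤ) ≤ n - b)]

private lemma pd_arith4 (n b d cc : ℤ) (f7 : d + 3 ≤ b) (f9 : 1 ≤ d)
    (f8 : 2 * b + 2 * d + 2 ≤ n) (hcc : b ≤ cc)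
    (hkey : ((n + 1) * (b * (b - 1) + d) - b * (b + 1)) * b
      < ((n + 1) * (b * (b - 1) + 0) - b * (cc - 1)) * b) : False := by
  have hb0 : (0:ℤ) ≤ b := by linarith
  nlinarith [hkey, mul_nonneg (mul_nonneg hb0 hb0) (sub_nonneg.mpr hcc),
    mul_nonneg (sub_nonneg.mpr f9) (mul_nonneg hb0 (by linarith : (0:ℤ) ≤ n + 1)),
    mul_nonneg hb0 (by linarith : (0:ℤ) ≤ n + 1 - 2*b - 2*d - 3)]

private lemma pd_arith5 (n b d s cc : ℤ) (f1 : 1 ≤ s) (hsd : s ≤ d) (f9 : 1 ≤ d)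
    (f7 : d + 3 ≤ b) (f8 : 2 * b + 2 * d + 2 ≤ n) (hcc : s + 1 ≤ cc)
    (hkey : ((n + 1) * (b * (b - 1) + 2 * d + 1) - (b + 1) * (b + 1)) * (s + 1)
      < ((n + 1) * (s * (s - 1) + s + (s + 1)) - (s + 1) * (cc - 1)) * (b + 1)) :
    False := by
  have hs0 : (0:ℤ) ≤ s := by linarith
  have hb0 : (0:ℤ) ≤ b := by linarith
  have e1 : 0 ≤ s * ((b * b - 2 * b + 2 * d) - (b + 1) * s) := by
    apply mul_nonneg hs0
    nlinarith [mul_nonneg (by linarith : (0:ℤ) ≤ b + 1) (by linarith : (0:ℤ) ≤ d - s)]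
  have q1 : b * (b - 2) ≤ (s + 1) * (b * (b - 1) + 2 * d + 1) - (b + 1) * (s * s + s + 1) := by
    nlinarith [e1]
  have q2 : 4 * ((s + 1) * (b + 1 - s)) ≤ (b + 2) ^ 2 := by
    nlinarith [sq_nonneg (b - 2 * s)]
  have q3 : (b + 1) * (b + 2) ^ 2 ≤ 4 * (n + 1) * (b * (b - 2)) := by
    nlinarith [mul_nonneg (by linarith : (0:ℤ) ≤ b - 4) (mul_nonneg hb0 hb0),
      mul_nonneg (by linarith : (0:ℤ) ≤ n + 1 - 2 * b - 5)
        (mul_nonneg hb0 (by linarith : (0:ℤ) ≤ b - 2))]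
  have w1 := mul_le_mul_of_nonneg_left q1 (by linarith : (0:ℤ) ≤ n + 1)
  have w2 := mul_le_mul_of_nonneg_left q2 (by linarith : (0:ℤ) ≤ b + 1)
  have w3 : 0 ≤ (cc - (s + 1)) * ((s + 1) * (b + 1)) :=
    mul_nonneg (by linarith) (mul_nonneg (by linarith) (by linarith))
  nlinarith [hkey, w1, w2, w3, q3]

private lemma pd_arith6 (n b d s cc : ℤ) (f1 : 1 ≤ s) (hsd : s ≤ d) (f9 : 1 ≤ d)
    (f7 : d + 3 ≤ b) (f8 : 2 * b + 2 * d + 2 ≤ n) (hcc : s ≤ cc)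
    (hkey : ((n + 1) * (b * (b - 1) + 2 * d + 1) - (b + 1) * (b + 1)) * s
      < ((n + 1) * (s * (s - 1) + 0) - s * (cc - 1)) * (b + 1)) : False := by
  have hs0 : (0:ℤ) ≤ s := by linarith
  have hb0 : (0:ℤ) ≤ b := by linarith
  have u1 : 3 * b + d + 2 ≤ (b * (b - 1) + 2 * d + 1) - (b + 1) * (s - 1) := by
    nlinarith [mul_nonneg (by linarith : (0:ℤ) ≤ b + 1) (by linarith : (0:ℤ) ≤ d - s),
      mul_nonneg hb0 (by linarith : (0:ℤ) ≤ b - d - 3)]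
  have u2 := mul_le_mul_of_nonneg_left u1 hs0
  have u3 := mul_le_mul_of_nonneg_left u2 (by linarith : (0:ℤ) ≤ n + 1)
  have u4 : (b + 1) * (b + 1) ≤ (n + 1) * (3 * b + d + 2) := by
    nlinarith [mul_nonneg (by linarith : (0:ℤ) ≤ n + 1 - 2 * b - 2 * d - 3)
      (by linarith : (0:ℤ) ≤ 3 * b + d + 2)]
  have u5 := mul_le_mul_of_nonneg_left u4 hs0
  have w3 : 0 ≤ (cc - s) * (s * (b + 1)) :=
    mul_nonneg (by linarith) (mul_nonneg hs0 (by linarith))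
  have w4 : 0 ≤ (s - 1) * (s * (b + 1)) :=
    mul_nonneg (by linarith) (mul_nonneg hs0 (by linarith))
  nlinarith [hkey, u3, u5, w3, w4]


set_option maxHeartbeats 2000000 in
/-- Proposition (pinched dome gadget, avg-EQ): in an avg-EQ altruistic hedonic game
on `n` players whose network of friends `G` contains a pinched `(d,k')`-dome gadget
on `P` (`d ≥ 1`, `k' > 2d+3`, `n ≥ k'·(d+1)`) such that no player of `P` except the
top player has a friend outside `P`, if `P` is a coalition of the coalition
structure `Γ` and a coalition `C` blocks `Γ`, then `C` contains no player of the
base clique (in particular, no fringe player). -/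
theorem pinched_dome_base_not_in_blocking_avgEQ {N : Type*} [Fintype N] [DecidableEq N]
    (G : SimpleGraph N) (d k' : ℕ) (hd : 1 ≤ d) (hk' : 2 * d + 3 < k')
    (hn : k' * (d + 1) ≤ Fintype.card N)
    (P : Finset N) (top mid : N) (fringe : Fin d → N)
    (hgadget : IsPinchedDomeGadget G d k' P top mid fringe)
    (houtside : ∀ x ∈ P, x ≠ top → ∀ y : N, G.Adj x y → y ∈ P)
    (Γ : CoalitionStructure N) (hΓ : ∀ i ∈ P, Γ.part i = P)
    (C : Finset N) (hC : Blocks (utilAvgEQ G) Γ C) :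
    ∀ x ∈ pdomeBase P top mid, x ∉ C := by

  intro x hxB hxC
  obtain ⟨hCne, hblock⟩ := hC
  obtain ⟨hPcard, htopP, hmidP, hmt, hfr_mem, hfr_inj, hadj⟩ := hgadget
  set B := pdomeBase P top mid with hB_def
  -- basic facts
  have hBP : B ⊆ P := Finset.sdiff_subset
  have htopB : top ∉ B := by simp [hB_def, pdomeBase]
  have hmidB : mid ∉ B := by simp [hB_def, pdomeBase]
  have hmemB : ∀ c ∈ B, c ∈ P ∧ c ≠ top ∧ c ≠ mid := by
    intro c hc
    simp only [hB_def, pdomeBase, Finset.mem_sdiff, Finset.mem_insert,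
      Finset.mem_singleton] at hc
    tauto
  set Fimg := Finset.univ.image fringe with hF_def
  have hFB : Fimg ⊆ B := by
    intro y hy
    simp only [hF_def, Finset.mem_image] at hy
    obtain ⟨i, -, rfl⟩ := hy
    exact hfr_mem i
  have hFcard : Fimg.card = d := by
    rw [hF_def, Finset.card_image_of_injective _ hfr_inj, Finset.card_univ,
      Fintype.card_fin]
  have hiff : ∀ z : N, (∃ i, z = fringe i) ↔ z ∈ Fimg := by
    intro z; simp [hF_def, eq_comm]
  have hFne : Fimg.Nonempty := Finset.card_pos.mp (by rw [hFcard]; omega)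
  clear_value B Fimg
  -- cardinalities
  have hPB : P.card = B.card + 2 := by
    have hsub2 : ({top, mid} : Finset N) ⊆ P := by
      intro y hy
      simp only [Finset.mem_insert, Finset.mem_singleton] at hy
      rcases hy with rfl | rfl <;> assumption
    have h2 : ({top, mid} : Finset N).card = 2 := Finset.card_pair (Ne.symm hmt)
    have := Finset.card_sdiff_add_card_eq_card hsub2
    rw [h2] at this
    rw [← this, hB_def]
    rfl
  have hbd : d + 3 ≤ B.card := by
    have hk2 : d ≤ k' := by omega
    omega
  have hnB : 2 * B.card + 2 * d + 2 ≤ Fintype.card N := by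
    have hk : k' = B.card + d + 1 := by omega
    nlinarith [hn, hd]
  -- global friend sets
  have hfriends_base : ∀ c ∈ B, Finset.univ.filter (fun j => G.Adj c j)
      = if c ∈ Fimg then insert mid (B.erase c) else B.erase c := by
    intro c hc
    obtain ⟨hcP, hct, hcm⟩ := hmemB c hc
    ext y
    simp only [Finset.mem_filter, Finset.mem_univ, true_and]
    by_cases hyP : y ∈ P
    · rw [hadj c hcP y hyP]
      by_cases hcF : c ∈ Fimg
      · rw [if_pos hcF]
        simp only [Finset.mem_insert, Finset.mem_erase]
        constructor
        · rintro (⟨rfl, -⟩ | ⟨-, rfl⟩ | ⟨-, hyB, hne⟩ | ⟨rfl, -⟩ | ⟨rfl, -⟩)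
          · exact absurd rfl hct
          · exact absurd rfl hcm
          · exact Or.inr ⟨Ne.symm hne, hyB⟩
          · exact absurd rfl hcm
          · exact Or.inl rfl
        · rintro (rfl | ⟨hne, hyB⟩)
          · exact Or.inr (Or.inr (Or.inr (Or.inr ⟨rfl, (hiff c).mpr hcF⟩)))
          · exact Or.inr (Or.inr (Or.inl ⟨hc, hyB, Ne.symm hne⟩))
      · rw [if_neg hcF]
        simp only [Finset.mem_erase]
        constructor
        · rintro (⟨rfl, -⟩ | ⟨-, rfl⟩ | ⟨-, hyB, hne⟩ | ⟨rfl, -⟩ | ⟨-, hi⟩)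
          · exact absurd rfl hct
          · exact absurd rfl hcm
          · exact ⟨Ne.symm hne, hyB⟩
          · exact absurd rfl hcm
          · exact absurd ((hiff c).mp hi) hcF
        · rintro ⟨hne, hyB⟩
          exact Or.inr (Or.inr (Or.inl ⟨hc, hyB, Ne.symm hne⟩))
    · refine iff_of_false (fun hadj' => hyP (houtside c hcP hct y hadj')) ?_
      split_ifs with hcF
      · simp only [Finset.mem_insert, Finset.mem_erase]
        rintro (rfl | ⟨-, hyB⟩)
        · exact hyP hmidP
        · exact hyP (hBP hyB)
      · intro hy
        exact hyP (hBP (Finset.mem_of_mem_erase hy))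
  have hfriends_mid : Finset.univ.filter (fun j => G.Adj mid j) = insert top Fimg := by
    ext y
    simp only [Finset.mem_filter, Finset.mem_univ, true_and, Finset.mem_insert]
    by_cases hyP : y ∈ P
    · rw [hadj mid hmidP y hyP]
      constructor
      · rintro (⟨h1, -⟩ | ⟨rfl, -⟩ | ⟨hmB, -, -⟩ | ⟨-, hi⟩ | ⟨-, hi⟩)
        · exact absurd h1 hmt
        · exact Or.inl rfl
        · exact absurd hmB hmidB
        · exact Or.inr ((hiff y).mp hi)
        · exact absurd (hFB ((hiff mid).mp hi)) hmidB
      · rintro (rfl | hyF)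
        · exact Or.inr (Or.inl ⟨rfl, rfl⟩)
        · exact Or.inr (Or.inr (Or.inr (Or.inl ⟨rfl, (hiff y).mpr hyF⟩)))
    · refine iff_of_false (fun hadj' => hyP (houtside mid hmidP hmt y hadj')) ?_
      rintro (rfl | hyF)
      · exact hyP htopP
      · exact hyP (hBP (hFB hyF))
  -- friends within a coalition D
  have hfr_base : ∀ (D : Finset N), ∀ c ∈ B, friendsIn G D c
      = if c ∈ Fimg ∧ mid ∈ D then insert mid ((B ∩ D).erase c)
        else (B ∩ D).erase c := by
    intro D c hc
    rw [friendsIn_eq_inter, hfriends_base c hc]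
    by_cases hcF : c ∈ Fimg
    · rw [if_pos hcF]
      by_cases hmD : mid ∈ D
      · rw [if_pos ⟨hcF, hmD⟩]
        ext y
        simp only [Finset.mem_inter, Finset.mem_insert, Finset.mem_erase]
        constructor
        · rintro ⟨hyD, (rfl | ⟨hne, hyB⟩)⟩
          · exact Or.inl rfl
          · exact Or.inr ⟨hne, hyB, hyD⟩
        · rintro (rfl | ⟨hne, hyB, hyD⟩)
          · exact ⟨hmD, Or.inl rfl⟩
          · exact ⟨hyD, Or.inr ⟨hne, hyB⟩⟩
      · rw [if_neg (by tauto)]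
        ext y
        simp only [Finset.mem_inter, Finset.mem_insert, Finset.mem_erase]
        constructor
        · rintro ⟨hyD, (rfl | ⟨hne, hyB⟩)⟩
          · exact absurd hyD hmD
          · exact ⟨hne, hyB, hyD⟩
        · rintro ⟨hne, hyB, hyD⟩
          exact ⟨hyD, Or.inr ⟨hne, hyB⟩⟩
    · rw [if_neg hcF, if_neg (by tauto)]
      ext y
      simp only [Finset.mem_inter, Finset.mem_erase]
      tauto
  have hfr_mid : ∀ (D : Finset N), friendsIn G D mid = D ∩ insert top Fimg := by
    intro D
    rw [friendsIn_eq_inter, hfriends_mid]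
  -- sum of friend-counts over B ∩ D
  have hsum_base : ∀ (D : Finset N), ∑ c ∈ B ∩ D, ((friendsIn G D c).card : ℤ)
      = (B ∩ D).card * ((B ∩ D).card - 1)
        + (if mid ∈ D then ((Fimg ∩ D).card : ℤ) else 0) := by
    intro D
    have hstep : ∀ c ∈ B ∩ D, ((friendsIn G D c).card : ℤ)
        = ((B ∩ D).card - 1) + (if c ∈ Fimg ∧ mid ∈ D then 1 else 0) := by
      intro c hc
      have hcB : c ∈ B := (Finset.mem_inter.mp hc).1
      rw [hfr_base D c hcB]
      have hme : mid ∉ (B ∩ D).erase c := fun hme =>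
        hmidB (Finset.mem_inter.mp (Finset.mem_of_mem_erase hme)).1
      have herase : (((B ∩ D).erase c).card : ℤ) = (B ∩ D).card - 1 := by
        have := Finset.card_erase_add_one hc
        push_cast [← this]
        ring
      split_ifs with h
      · rw [Finset.card_insert_of_notMem hme]
        push_cast [herase]
        push_cast at herase
        omega
      · rw [herase]; ring
    rw [Finset.sum_congr rfl hstep, Finset.sum_add_distrib, Finset.sum_const,
      nsmul_eq_mul]
    by_cases hmD : mid ∈ D
    · simp only [hmD, and_true, if_true]
      rw [Finset.sum_boole]
      have hfilter : (B ∩ D).filter (fun c => c ∈ Fimg) = Fimg ∩ D := by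
        ext y
        simp only [Finset.mem_filter, Finset.mem_inter]
        exact ⟨fun h => ⟨h.2, h.1.2⟩, fun h => ⟨⟨hFB h.1, h.2⟩, h.1⟩⟩
      rw [hfilter]
    · simp only [hmD, and_false, if_false, Finset.sum_const_zero]
  -- sum of valuations over a subset S of coalition D
  have hsum_fval : ∀ (D S : Finset N), S ⊆ D →
      ∑ c ∈ S, fval G D c
        = ((Fintype.card N : ℤ) + 1) * (∑ c ∈ S, ((friendsIn G D c).card : ℤ))
          - (S.card : ℤ) * ((D.card : ℤ) - 1) := by
    intro D S hSD
    have hstep : ∀ c ∈ S, fval G D c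
        = ((Fintype.card N : ℤ) + 1) * ((friendsIn G D c).card : ℤ)
          + (1 - (D.card : ℤ)) := by
      intro c hc
      rw [fval_eq G D c (hSD hc)]
      ring
    rw [Finset.sum_congr rfl hstep, Finset.sum_add_distrib, Finset.sum_const,
      ← Finset.mul_sum, nsmul_eq_mul]
    ring
  -- blocking inequality, integer form
  have hblockZ : ∀ y, y ∈ C → y ∈ P →
      (∑ c ∈ insert y (friendsIn G P y), fval G P c)
          * ((insert y (friendsIn G C y)).card : ℤ)
        < (∑ c ∈ insert y (friendsIn G C y), fval G C c)
          * ((insert y (friendsIn G P y)).card : ℤ) := by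
    intro y hyC hyP
    have h := hblock y hyC
    rw [hΓ y hyP] at h
    unfold utilAvgEQ at h
    have hpos1 : (0 : ℚ) < ((insert y (friendsIn G P y)).card : ℚ) := by
      exact_mod_cast Finset.card_pos.mpr (Finset.insert_nonempty _ _)
    have hpos2 : (0 : ℚ) < ((insert y (friendsIn G C y)).card : ℚ) := by
      exact_mod_cast Finset.card_pos.mpr (Finset.insert_nonempty _ _)
    rw [div_lt_div_iff₀ hpos1 hpos2] at h
    exact_mod_cast h
  -- P-side computations
  have hBPi : B ∩ P = B := Finset.inter_eq_left.mpr hBP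
  have hFPi : Fimg ∩ P = Fimg := Finset.inter_eq_left.mpr (hFB.trans hBP)
  have htF : top ∉ Fimg := fun h => htopB (hFB h)
  have hsumB_P : ∑ c ∈ B, ((friendsIn G P c).card : ℤ)
      = (B.card : ℤ) * ((B.card : ℤ) - 1) + (d : ℤ) := by
    have := hsum_base P
    rw [hBPi, hFPi, if_pos hmidP, hFcard] at this
    exact this
  have hfmidP : ((friendsIn G P mid).card : ℤ) = (d : ℤ) + 1 := by
    rw [hfr_mid P, Finset.inter_eq_right.mpr ?_, Finset.card_insert_of_notMem htF,
      hFcard]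
    · push_cast; ring
    · exact Finset.insert_subset htopP (hFB.trans hBP)
  have hPcZ : (P.card : ℤ) = (B.card : ℤ) + 2 := by exact_mod_cast hPB
  have hmidBC : ∀ (D : Finset N), mid ∉ B ∩ D := fun D hmD =>
    hmidB (Finset.mem_inter.mp hmD).1
  have hsumP_nf : ∑ c ∈ B, fval G P c
      = ((Fintype.card N : ℤ) + 1) * ((B.card : ℤ) * ((B.card : ℤ) - 1) + (d : ℤ))
        - (B.card : ℤ) * ((B.card : ℤ) + 1) := by
    rw [hsum_fval P B hBP, hsumB_P, hPcZ]
    ring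
  have hmidnotB : mid ∉ B := hmidB
  have hsumP_f : ∑ c ∈ insert mid B, fval G P c
      = ((Fintype.card N : ℤ) + 1)
          * ((B.card : ℤ) * ((B.card : ℤ) - 1) + 2 * (d : ℤ) + 1)
        - ((B.card : ℤ) + 1) * ((B.card : ℤ) + 1) := by
    rw [hsum_fval P (insert mid B) (Finset.insert_subset hmidP hBP),
      Finset.sum_insert hmidnotB, hfmidP, hsumB_P, hPcZ,
      Finset.card_insert_of_notMem hmidnotB]
    push_cast
    ring
  have hcardSP_f : ((insert mid B).card : ℤ) = (B.card : ℤ) + 1 := by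
    rw [Finset.card_insert_of_notMem hmidnotB]; push_cast; ring
  -- C-side abbreviations and facts
  have hxBC : x ∈ B ∩ C := Finset.mem_inter.mpr ⟨hxB, hxC⟩
  have hs1 : 1 ≤ (B ∩ C).card := Finset.card_pos.mpr ⟨x, hxBC⟩
  have hsb : (B ∩ C).card ≤ B.card := Finset.card_le_card Finset.inter_subset_left
  have hFCBC : Fimg ∩ C ⊆ B ∩ C := fun y hy =>
    Finset.mem_inter.mpr ⟨hFB (Finset.mem_inter.mp hy).1, (Finset.mem_inter.mp hy).2⟩
  have hts : (Fimg ∩ C).card ≤ (B ∩ C).card := Finset.card_le_card hFCBC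
  have htd : (Fimg ∩ C).card ≤ d := by
    calc (Fimg ∩ C).card ≤ Fimg.card := Finset.card_le_card Finset.inter_subset_left
    _ = d := hFcard
  have hscc : (B ∩ C).card ≤ C.card := Finset.card_le_card Finset.inter_subset_right
  have hccn : C.card ≤ Fintype.card N := by
    calc C.card ≤ Finset.univ.card := Finset.card_le_univ C
    _ = Fintype.card N := Finset.card_univ
  have hsumBC_C : ∑ c ∈ B ∩ C, ((friendsIn G C c).card : ℤ)
      = ((B ∩ C).card : ℤ) * (((B ∩ C).card : ℤ) - 1)
        + (if mid ∈ C then (((Fimg ∩ C).card : ℤ)) else 0) := hsum_base C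
  have hsumC_base : ∑ c ∈ B ∩ C, fval G C c
      = ((Fintype.card N : ℤ) + 1)
          * (((B ∩ C).card : ℤ) * (((B ∩ C).card : ℤ) - 1)
            + (if mid ∈ C then (((Fimg ∩ C).card : ℤ)) else 0))
        - ((B ∩ C).card : ℤ) * ((C.card : ℤ) - 1) := by
    rw [hsum_fval C (B ∩ C) Finset.inter_subset_right, hsumBC_C]
  -- integer facts
  have f1 : (1:ℤ) ≤ ((B ∩ C).card : ℤ) := by exact_mod_cast hs1
  have f2 : ((B ∩ C).card : ℤ) ≤ (B.card : ℤ) := by exact_mod_cast hsb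
  have f3 : ((Fimg ∩ C).card : ℤ) ≤ ((B ∩ C).card : ℤ) := by exact_mod_cast hts
  have f4 : ((Fimg ∩ C).card : ℤ) ≤ (d : ℤ) := by exact_mod_cast htd
  have f5 : ((B ∩ C).card : ℤ) ≤ (C.card : ℤ) := by exact_mod_cast hscc
  have f6 : (C.card : ℤ) ≤ (Fintype.card N : ℤ) := by exact_mod_cast hccn
  have f7 : (d : ℤ) + 3 ≤ (B.card : ℤ) := by exact_mod_cast hbd
  have f8 : 2 * (B.card : ℤ) + 2 * (d : ℤ) + 2 ≤ (Fintype.card N : ℤ) := by exact_mod_cast hnB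
  have f9 : (1 : ℤ) ≤ (d : ℤ) := by exact_mod_cast hd
  have f0 : (0 : ℤ) ≤ ((Fimg ∩ C).card : ℤ) := Int.natCast_nonneg _
  have f10 : (0 : ℤ) ≤ (B.card : ℤ) := Int.natCast_nonneg _
  have f11 : (0 : ℤ) ≤ ((B ∩ C).card : ℤ) := Int.natCast_nonneg _
  by_cases hall : ∃ y ∈ B ∩ C, y ∉ Fimg
  · obtain ⟨y, hyBC, hyF⟩ := hall
    have hyB : y ∈ B := (Finset.mem_inter.mp hyBC).1
    have hyC : y ∈ C := (Finset.mem_inter.mp hyBC).2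
    have hSC : insert y (friendsIn G C y) = B ∩ C := by
      rw [hfr_base C y hyB, if_neg (fun h => hyF h.1), Finset.insert_erase hyBC]
    have hSP : insert y (friendsIn G P y) = B := by
      rw [hfr_base P y hyB, if_neg (fun h => hyF h.1), hBPi, Finset.insert_erase hyB]
    have hkey := hblockZ y hyC (hBP hyB)
    rw [hSC, hSP, hsumP_nf, hsumC_base] at hkey
    by_cases hseq : (B ∩ C).card = B.card
    · -- B is contained in C
      have hBC : B ∩ C = B :=
        Finset.eq_of_subset_of_card_le Finset.inter_subset_left (le_of_eq hseq.symm)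
      have hBsubC : B ⊆ C := by
        intro w hw
        have hw2 : w ∈ B ∩ C := hBC.symm ▸ hw
        exact (Finset.mem_inter.mp hw2).2
      have hFC : Fimg ∩ C = Fimg := Finset.inter_eq_left.mpr (hFB.trans hBsubC)
      by_cases hmC : mid ∈ C
      · rw [if_pos hmC, hseq, hFC, hFcard] at hkey
        have hccb : (C.card : ℤ) ≤ (B.card : ℤ) + 1 := pd_arith2 _ _ _ _ f7 f9 hkey
        have hCeq : C = insert mid B := by
          have hsub : insert mid B ⊆ C := Finset.insert_subset hmC hBsubC
          have hcardle : C.card ≤ (insert mid B).card := by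
            rw [Finset.card_insert_of_notMem hmidnotB]
            exact_mod_cast hccb
          exact (Finset.eq_of_subset_of_card_le hsub hcardle).symm
        obtain ⟨z, hzF⟩ := hFne
        have hzB : z ∈ B := hFB hzF
        have hzC : z ∈ C := hBsubC hzB
        have hzBC : z ∈ B ∩ C := Finset.mem_inter.mpr ⟨hzB, hzC⟩
        have hSCz : insert z (friendsIn G C z) = insert mid (B ∩ C) := by
          rw [hfr_base C z hzB, if_pos ⟨hzF, hmC⟩, Finset.insert_comm,
            Finset.insert_erase hzBC]
        have hSPz : insert z (friendsIn G P z) = insert mid B := by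
          rw [hfr_base P z hzB, if_pos ⟨hzF, hmidP⟩, hBPi, Finset.insert_comm,
            Finset.insert_erase hzB]
        have hfmidC : ((friendsIn G C mid).card : ℤ) = (d : ℤ) := by
          rw [hfr_mid C]
          have hinter : C ∩ insert top Fimg = Fimg := by
            rw [hCeq]
            ext w
            simp only [Finset.mem_inter, Finset.mem_insert]
            constructor
            · rintro ⟨(rfl | hwB), (rfl | hwF)⟩
              · exact absurd rfl hmt
              · exact absurd (hFB hwF) hmidB
              · exact absurd hwB htopB
              · exact hwF
            · intro hwF
              exact ⟨Or.inr (hFB hwF), Or.inr hwF⟩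
          rw [hinter, hFcard]
        have hsumBcards : ∑ c ∈ B, ((friendsIn G C c).card : ℤ)
            = (B.card : ℤ) * ((B.card : ℤ) - 1) + (d : ℤ) := by
          rw [← hBC, hsumBC_C, if_pos hmC, hseq, hFC, hFcard]
        have hccb1 : (C.card : ℤ) = (B.card : ℤ) + 1 := by
          rw [hCeq, Finset.card_insert_of_notMem hmidnotB]
          push_cast
          ring
        have hsumC_f : ∑ c ∈ insert mid B, fval G C c
            = ((Fintype.card N : ℤ) + 1) * ((B.card : ℤ) * ((B.card : ℤ) - 1) + 2 * (d : ℤ))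
              - ((B.card : ℤ) + 1) * ((B.card : ℤ) + 1 - 1) := by
          rw [hsum_fval C (insert mid B) (by rw [hCeq]),
            Finset.sum_insert hmidnotB, hfmidC, hsumBcards,
            Finset.card_insert_of_notMem hmidnotB, hccb1]
          push_cast
          ring
        have hkey2 := hblockZ z hzC (hBP hzB)
        rw [hSCz, hSPz, hsumP_f, hcardSP_f, hBC, hsumC_f, hcardSP_f] at hkey2
        exact pd_arith3 _ _ _ f7 f9 f8 hkey2
      · rw [if_neg hmC, hseq] at hkey
        have hccb : (B.card : ℤ) ≤ (C.card : ℤ) := by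
          calc (B.card : ℤ) = ((B ∩ C).card : ℤ) := by exact_mod_cast hseq.symm
          _ ≤ (C.card : ℤ) := f5
        exact pd_arith4 _ _ _ _ f7 f9 f8 hccb hkey
    · -- s < b
      have hbs1 : ((B ∩ C).card : ℤ) + 1 ≤ (B.card : ℤ) := by
        have : (B ∩ C).card < B.card := lt_of_le_of_ne hsb hseq
        exact_mod_cast this
      by_cases hmC : mid ∈ C
      · rw [if_pos hmC] at hkey
        exact pd_arith1 _ _ _ _ _ _ f1 hbs1 f0 f4 f9 f7 f8 f5 hkey
      · rw [if_neg hmC] at hkey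
        exact pd_arith1 _ _ _ _ _ 0 f1 hbs1 le_rfl (by positivity) f9 f7 f8 f5 hkey
  · push_neg at hall
    have hxF : x ∈ Fimg := hall x hxBC
    have hBCF : B ∩ C = Fimg ∩ C :=
      Finset.Subset.antisymm
        (fun w hw => Finset.mem_inter.mpr ⟨hall w hw, (Finset.mem_inter.mp hw).2⟩)
        hFCBC
    have hst : ((Fimg ∩ C).card : ℤ) = ((B ∩ C).card : ℤ) := by rw [hBCF]
    have hsd : ((B ∩ C).card : ℤ) ≤ (d : ℤ) := by rw [← hst]; exact f4
    have hSPx : insert x (friendsIn G P x) = insert mid B := by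
      rw [hfr_base P x hxB, if_pos ⟨hxF, hmidP⟩, hBPi, Finset.insert_comm,
        Finset.insert_erase hxB]
    have hkey := hblockZ x hxC (hBP hxB)
    by_cases hmC : mid ∈ C
    · have hSCx : insert x (friendsIn G C x) = insert mid (B ∩ C) := by
        rw [hfr_base C x hxB, if_pos ⟨hxF, hmC⟩, Finset.insert_comm,
          Finset.insert_erase hxBC]
      rw [hSCx, hSPx, hsumP_f, hcardSP_f] at hkey
      have hcardSC : ((insert mid (B ∩ C)).card : ℤ) = ((B ∩ C).card : ℤ) + 1 := by
        rw [Finset.card_insert_of_notMem (hmidBC C)]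
        push_cast
        ring
      rw [hcardSC] at hkey
      have hfmidC_le : ((friendsIn G C mid).card : ℤ) ≤ ((Fimg ∩ C).card : ℤ) + 1 := by
        rw [hfr_mid C]
        have hsub : C ∩ insert top Fimg ⊆ insert top (Fimg ∩ C) := by
          intro w hw
          rcases Finset.mem_inter.mp hw with ⟨hwC, hw2⟩
          rcases Finset.mem_insert.mp hw2 with rfl | hwF
          · exact Finset.mem_insert_self _ _
          · exact Finset.mem_insert_of_mem (Finset.mem_inter.mpr ⟨hwF, hwC⟩)
        calc ((C ∩ insert top Fimg).card : ℤ)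
            ≤ ((insert top (Fimg ∩ C)).card : ℤ) := by
              exact_mod_cast Finset.card_le_card hsub
          _ ≤ ((Fimg ∩ C).card : ℤ) + 1 := by
              exact_mod_cast Finset.card_insert_le _ _
      have hsum_le : ∑ c ∈ insert mid (B ∩ C), fval G C c
          ≤ ((Fintype.card N : ℤ) + 1)
              * (((B ∩ C).card : ℤ) * (((B ∩ C).card : ℤ) - 1) + ((Fimg ∩ C).card : ℤ)
                + (((Fimg ∩ C).card : ℤ) + 1))
            - (((B ∩ C).card : ℤ) + 1) * ((C.card : ℤ) - 1) := by
        rw [hsum_fval C (insert mid (B ∩ C))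
            (Finset.insert_subset hmC Finset.inter_subset_right),
          Finset.sum_insert (hmidBC C), hsumBC_C, if_pos hmC, hcardSC]
        have hn1 : (0 : ℤ) ≤ (Fintype.card N : ℤ) + 1 := by positivity
        refine sub_le_sub_right ?_ _
        refine le_trans (mul_le_mul_of_nonneg_left
          (add_le_add_left hfmidC_le _) hn1) (le_of_eq (by ring))
      have hccx : ((B ∩ C).card : ℤ) + 1 ≤ (C.card : ℤ) := by
        have h := Finset.card_le_card
          (show insert mid (B ∩ C) ⊆ C from Finset.insert_subset hmC Finset.inter_subset_right)
        rw [Finset.card_insert_of_notMem (hmidBC C)] at h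
        exact_mod_cast h
      have hkey2 := lt_of_lt_of_le hkey
        (mul_le_mul_of_nonneg_right hsum_le (by linarith : (0:ℤ) ≤ (B.card : ℤ) + 1))
      rw [hst] at hkey2
      exact pd_arith5 _ _ _ _ _ f1 hsd f9 f7 f8 hccx hkey2
    · have hSCx : insert x (friendsIn G C x) = B ∩ C := by
        rw [hfr_base C x hxB, if_neg (fun h => hmC h.2), Finset.insert_erase hxBC]
      rw [hSCx, hSPx, hsumP_f, hcardSP_f, hsumC_base, if_neg hmC] at hkey
      exact pd_arith6 _ _ _ _ _ f1 hsd f9 f7 f8 f5 hkey
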